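/- arXiv:1407.1968 — 2 statements merged into one kernel-verified Lean document; each statement's English description precedes it below -/
import Mathlib

section
/- For all integers i ≥ 0 and real parameters a, b, d with b ≥ 0 and d ≥ a ≥ 0, the polynomial product s_i(q)·s_{i+1}(q) − t_{i+1}(q) has only nonnegative coefficients as a polynomial in q, where s_i(q) = (di + ab) + (di + bd − ab)q and t_{i+1}(q) = d²(i+1)(i+b)q. -/
open Polynomial

/-- For all integers `i ≥ 0` and real `a, b, d` with `b ≥ 0` and `d ≥ a ≥ 0`,
the polynomial `s_i(q) * s_{i+1}(q) - t_{i+1}(q)` has only nonnegative coefficients,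
where `s_i(q) = (d i + a b) + (d i + b d - a b) q` and
`t_{i+1}(q) = d^2 (i+1)(i+b) q`. -/
theorem stmt0 (a b d : ℝ) (hb : 0 ≤ b) (ha : 0 ≤ a) (had : a ≤ d) (i : ℕ) :
    ∀ k : ℕ,
      0 ≤ (((C (d * i + a * b) + C (d * i + b * d - a * b) * X) *
            (C (d * (i + 1) + a * b) + C (d * (i + 1) + b * d - a * b) * X) -
            C (d ^ 2 * (i + 1) * (i + b)) * X : Polynomial ℝ)).coeff k := by
  have hd : (0:ℝ) ≤ d := le_trans ha had
  have hi : (0:ℝ) ≤ (i:ℝ) := Nat.cast_nonneg i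
  have key : (((C (d * i + a * b) + C (d * i + b * d - a * b) * X) *
            (C (d * (i + 1) + a * b) + C (d * (i + 1) + b * d - a * b) * X) -
            C (d ^ 2 * (i + 1) * (i + b)) * X : Polynomial ℝ))
      = C ((d * i + a * b) * (d * (i + 1) + a * b))
        + C ((d * i + a * b) * (d * (i + 1) + b * d - a * b)
            + (d * i + b * d - a * b) * (d * (i + 1) + a * b)
            - d ^ 2 * (i + 1) * (i + b)) * X
        + C ((d * i + b * d - a * b) * (d * (i + 1) + b * d - a * b)) * X ^ 2 := by
    simp only [map_add, map_mul, map_sub, map_pow, map_one]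
    ring
  intro k
  rw [key]
  have h0 : 0 ≤ (d * i + a * b) * (d * (i + 1) + a * b) := by positivity
  have h1 : 0 ≤ (d * i + a * b) * (d * (i + 1) + b * d - a * b)
            + (d * i + b * d - a * b) * (d * (i + 1) + a * b)
            - d ^ 2 * (i + 1) * (i + b) := by
    nlinarith [mul_nonneg (mul_nonneg hd hi) (mul_nonneg hd hi),
      mul_nonneg (mul_nonneg hd hi) hd,
      mul_nonneg (mul_nonneg hd hi) (mul_nonneg ha hb),
      mul_nonneg (mul_nonneg hd hi) (mul_nonneg hb (sub_nonneg.2 had)),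
      mul_nonneg hd (mul_nonneg hb (sub_nonneg.2 had)),
      mul_nonneg hd (mul_nonneg ha hb),
      mul_nonneg (mul_nonneg ha hb) (mul_nonneg hb (sub_nonneg.2 had))]
  have h2 : 0 ≤ (d * i + b * d - a * b) * (d * (i + 1) + b * d - a * b) := by
    have hba : a * b ≤ b * d := by nlinarith
    have e1 : 0 ≤ d * i + b * d - a * b := by nlinarith [mul_nonneg hd hi]
    have e2 : 0 ≤ d * (i + 1) + b * d - a * b := by nlinarith [mul_nonneg hd hi]
    exact mul_nonneg e1 e2
  match k with
  | 0 =>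
    simp only [coeff_add, coeff_C, coeff_C_mul, coeff_X, coeff_X_pow]
    norm_num
    exact h0
  | 1 =>
    simp only [coeff_add, coeff_C, coeff_C_mul, coeff_X, coeff_X_pow]
    norm_num
    linarith
  | 2 =>
    simp only [coeff_add, coeff_C, coeff_C_mul, coeff_X, coeff_X_pow]
    norm_num
    exact h2
  | (n+3) =>
    simp only [coeff_add, coeff_C, coeff_C_mul, coeff_X, coeff_X_pow]
    rw [if_neg (by omega), if_neg (by omega), if_neg (by omega)]
    norm_num
end

section
/- For all real numbers a, b, d with b ≥ 0 and d ≥ a ≥ 0, and every integer i ≥ 0: (di+ab)(di+d+bd−ab) + (di+bd−ab)(di+d+ab) − d²(i+1)(i+b) ≥ 0. -/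
/-- The `q`-coefficient of `s_i(q) s_{i+1}(q) - t_{i+1}(q)` is nonnegative. -/
theorem stmt2 (a b d : ℝ) (hb : 0 ≤ b) (ha : 0 ≤ a) (had : a ≤ d) (i : ℕ) :
    0 ≤ (d * i + a * b) * (d * i + d + b * d - a * b) +
        (d * i + b * d - a * b) * (d * i + d + a * b) -
        d ^ 2 * (i + 1) * (i + b) := by
  have hi : (0:ℝ) ≤ i := Nat.cast_nonneg i
  have hd : 0 ≤ d := ha.trans had
  nlinarith [mul_nonneg (mul_nonneg ha (mul_nonneg hb hb)) (sub_nonneg.2 had),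
    sq_nonneg (d * i), mul_nonneg (mul_nonneg hd hi) (mul_nonneg hd (add_nonneg zero_le_one hb))]
end
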